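/- arXiv:2408.13764 — 2 statements merged into one kernel-verified Lean document; each statement's English description precedes it below -/
import Mathlib

section
/- There exists a constant C > 0 such that for all real x and all t with 0 < t ≤ 1, |∫_{ℝ} e^{i x ξ + i t ξ√(1+ξ²)} dξ| ≤ C t^{-1/2}. -/
open Filter Set MeasureTheory

lemma sqrt1_pos (ξ : ℝ) : 0 < Real.sqrt (1+ξ^2) := Real.sqrt_pos.mpr (by positivity)
lemma sq_sqrt1 (ξ : ℝ) : Real.sqrt (1+ξ^2) ^ 2 = 1 + ξ^2 := Real.sq_sqrt (by positivity)

lemma hasDerivAt_sqrt1 (ξ : ℝ) :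
    HasDerivAt (fun u : ℝ => Real.sqrt (1+u^2)) (ξ / Real.sqrt (1+ξ^2)) ξ := by
  have h1 : HasDerivAt (fun u : ℝ => 1 + u^2) (2*ξ) ξ := by
    simpa using (hasDerivAt_pow 2 ξ).const_add 1
  have h2 := (Real.hasDerivAt_sqrt (x := 1+ξ^2) (by positivity)).comp ξ h1
  refine h2.congr_deriv ?_
  field_simp

lemma hasDerivAt_phi (x t ξ : ℝ) :
    HasDerivAt (fun u => x*u + t*u*Real.sqrt (1+u^2))
      (x + t*(1+2*ξ^2)/Real.sqrt (1+ξ^2)) ξ := by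
  have h1 : HasDerivAt (fun u : ℝ => x*u) x ξ := by
    simpa using (hasDerivAt_id ξ).const_mul x
  have h2 : HasDerivAt (fun u : ℝ => t*u) t ξ := by
    simpa using (hasDerivAt_id ξ).const_mul t
  have h4 := h1.add (h2.mul (hasDerivAt_sqrt1 ξ))
  refine h4.congr_deriv ?_
  have hs := sq_sqrt1 ξ
  have hs0 := (sqrt1_pos ξ).ne'
  field_simp
  linear_combination t * hs

lemma hasDerivAt_p (x t ξ : ℝ) :
    HasDerivAt (fun u => x + t*(1+2*u^2)/Real.sqrt (1+u^2))
      (t*ξ*(3+2*ξ^2)/((1+ξ^2)*Real.sqrt (1+ξ^2))) ξ := by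
  have hnum : HasDerivAt (fun u : ℝ => t*(1+2*u^2)) (t*(4*ξ)) ξ := by
    have h := (((hasDerivAt_pow 2 ξ).const_mul 2).const_add 1).const_mul t
    refine h.congr_deriv ?_
    ring
  have hdiv := (hnum.div (hasDerivAt_sqrt1 ξ) (sqrt1_pos ξ).ne')
  have h := hdiv.const_add x
  refine h.congr_deriv ?_
  have hs := sq_sqrt1 ξ
  have hs0 := (sqrt1_pos ξ).ne'
  field_simp
  linear_combination (t*ξ*(1+2*ξ^2)) * hs

lemma ibp_bound (ψ p q : ℝ → ℝ) (a b lam : ℝ) (hab : a ≤ b) (hlam : 0 < lam)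
    (hψ : ∀ ξ, HasDerivAt ψ (p ξ) ξ)
    (hp : ∀ ξ, HasDerivAt p (q ξ) ξ)
    (hqc : Continuous q)
    (hq : ∀ ξ ∈ Icc a b, 0 ≤ q ξ)
    (sign : (∀ ξ ∈ Icc a b, lam ≤ p ξ) ∨ (∀ ξ ∈ Icc a b, p ξ ≤ -lam)) :
    ‖∫ ξ in a..b, Complex.exp (Complex.I * (ψ ξ : ℂ))‖ ≤ 3/lam := by
  have hpc : Continuous p := by
    rw [continuous_iff_continuousAt]; exact fun ξ => (hp ξ).continuousAt
  have hψc : Continuous ψ := by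
    rw [continuous_iff_continuousAt]; exact fun ξ => (hψ ξ).continuousAt
  have hpne : ∀ ξ ∈ Icc a b, p ξ ≠ 0 := by
    intro ξ hξ
    rcases sign with h | h
    · exact ne_of_gt (lt_of_lt_of_le hlam (h ξ hξ))
    · exact ne_of_lt (lt_of_le_of_lt (h ξ hξ) (by linarith))
  have hplam : ∀ ξ ∈ Icc a b, lam ≤ |p ξ| := by
    intro ξ hξ
    rcases sign with h | h
    · exact le_trans (h ξ hξ) (le_abs_self _)
    · exact le_trans (by linarith [h ξ hξ]) (neg_le_abs _)
  have huIcc : uIcc a b = Icc a b := uIcc_of_le hab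
  set F : ℝ → ℂ := fun ξ => Complex.exp (Complex.I * (ψ ξ : ℂ)) * (Complex.I * (p ξ : ℂ))⁻¹ with hF
  set E : ℝ → ℂ := fun ξ => Complex.exp (Complex.I * (ψ ξ : ℂ)) +
      Complex.exp (Complex.I * (ψ ξ : ℂ)) * Complex.I * (q ξ) / (p ξ)^2 with hE
  have hFderiv : ∀ ξ ∈ uIcc a b, HasDerivAt F (E ξ) ξ := by
    intro ξ hξ
    rw [huIcc] at hξ
    have hne : (p ξ : ℂ) ≠ 0 := by exact_mod_cast hpne ξ hξ
    have hne' : Complex.I * (p ξ : ℂ) ≠ 0 := mul_ne_zero Complex.I_ne_zero hne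
    have h1 : HasDerivAt (fun u => Complex.I * (ψ u : ℂ)) (Complex.I * (p ξ : ℂ)) ξ :=
      ((hψ ξ).ofReal_comp).const_mul Complex.I
    have h2 := h1.cexp
    have h3 : HasDerivAt (fun u => Complex.I * (p u : ℂ)) (Complex.I * (q ξ : ℂ)) ξ :=
      ((hp ξ).ofReal_comp).const_mul Complex.I
    have h4 : HasDerivAt (fun u : ℝ => (Complex.I * (p u : ℂ))⁻¹)
        (-((Complex.I * (p ξ : ℂ))^2)⁻¹ * (Complex.I * (q ξ : ℂ))) ξ :=
      (hasDerivAt_inv hne').comp ξ h3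
    have h5 := h2.mul h4
    refine h5.congr_deriv ?_
    rw [hE]
    field_simp
    ring_nf
    rw [Complex.I_sq]
    ring
  have hc1 : Continuous fun ξ : ℝ => Complex.exp (Complex.I * (ψ ξ : ℂ)) :=
    Complex.continuous_exp.comp (continuous_const.mul (Complex.continuous_ofReal.comp hψc))
  have hc2 : Continuous fun ξ : ℝ => Complex.exp (Complex.I * (ψ ξ : ℂ)) * Complex.I * (q ξ : ℂ) :=
    (hc1.mul continuous_const).mul (Complex.continuous_ofReal.comp hqc)
  have hc3 : Continuous fun ξ : ℝ => ((p ξ : ℂ))^2 := (Complex.continuous_ofReal.comp hpc).pow 2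
  have hint2 : IntervalIntegrable
      (fun ξ => Complex.exp (Complex.I * (ψ ξ : ℂ)) * Complex.I * (q ξ : ℂ) / ((p ξ : ℂ))^2)
      volume a b := by
    apply ContinuousOn.intervalIntegrable
    rw [huIcc]
    exact ContinuousOn.div hc2.continuousOn hc3.continuousOn
      (fun ξ hξ => pow_ne_zero 2 (by exact_mod_cast hpne ξ hξ))
  have hint1 : IntervalIntegrable (fun ξ => Complex.exp (Complex.I * (ψ ξ : ℂ))) volume a b :=
    hc1.intervalIntegrable a b
  have hintE : IntervalIntegrable E volume a b := hint1.add hint2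
  have hftc : ∫ ξ in a..b, E ξ = F b - F a :=
    intervalIntegral.integral_eq_sub_of_hasDerivAt hFderiv hintE
  have hsplit : ∫ ξ in a..b, E ξ = (∫ ξ in a..b, Complex.exp (Complex.I * (ψ ξ : ℂ))) +
      ∫ ξ in a..b, Complex.exp (Complex.I * (ψ ξ : ℂ)) * Complex.I * (q ξ : ℂ) / ((p ξ : ℂ))^2 :=
    intervalIntegral.integral_add hint1 hint2
  have hmain : (∫ ξ in a..b, Complex.exp (Complex.I * (ψ ξ : ℂ))) = (F b - F a) -
      ∫ ξ in a..b, Complex.exp (Complex.I * (ψ ξ : ℂ)) * Complex.I * (q ξ : ℂ) / ((p ξ : ℂ))^2 := by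
    rw [← hftc, hsplit]; ring
  -- bound on F at endpoints
  have hFbound : ∀ ξ ∈ Icc a b, ‖F ξ‖ ≤ 1/lam := by
    intro ξ hξ
    rw [hF]
    simp only [norm_mul, norm_inv, Complex.norm_exp]
    rw [show (Complex.I * ((ψ ξ : ℂ))).re = 0 by simp]
    simp only [Real.exp_zero, one_mul]
    rw [Complex.norm_I, Complex.norm_real, Real.norm_eq_abs, one_mul, one_div]
    exact inv_anti₀ hlam (hplam ξ hξ)
  -- the real FTC for the correction term
  have hGderiv : ∀ ξ ∈ uIcc a b, HasDerivAt (fun u => -(p u)⁻¹) (q ξ/(p ξ)^2) ξ := by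
    intro ξ hξ
    rw [huIcc] at hξ
    have h1 : HasDerivAt (fun u : ℝ => (p u)⁻¹) (-((p ξ)^2)⁻¹ * q ξ) ξ :=
      (hasDerivAt_inv (hpne ξ hξ)).comp ξ (hp ξ)
    have h2 := h1.neg
    refine h2.congr_deriv ?_
    field_simp
  have hqint : IntervalIntegrable (fun ξ => q ξ/(p ξ)^2) volume a b := by
    apply ContinuousOn.intervalIntegrable
    rw [huIcc]
    exact ContinuousOn.div hqc.continuousOn ((hpc.pow 2).continuousOn)
      (fun ξ hξ => pow_ne_zero 2 (hpne ξ hξ))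
  have hftc2 : ∫ ξ in a..b, q ξ/(p ξ)^2 = (p a)⁻¹ - (p b)⁻¹ := by
    rw [intervalIntegral.integral_eq_sub_of_hasDerivAt hGderiv hqint]
    ring
  have hmem_a : a ∈ Icc a b := left_mem_Icc.mpr hab
  have hmem_b : b ∈ Icc a b := right_mem_Icc.mpr hab
  have hcorr : (p a)⁻¹ - (p b)⁻¹ ≤ 1/lam := by
    rw [one_div]
    rcases sign with h | h
    · have h1 : (p a)⁻¹ ≤ lam⁻¹ := inv_anti₀ hlam (h a hmem_a)
      have h2 : 0 < (p b)⁻¹ := inv_pos.mpr (lt_of_lt_of_le hlam (h b hmem_b))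
      linarith
    · have h1 : (p a)⁻¹ ≤ 0 := inv_nonpos.mpr (by linarith [h a hmem_a])
      have h2 : (-(p b))⁻¹ ≤ lam⁻¹ := inv_anti₀ hlam (by linarith [h b hmem_b])
      rw [inv_neg] at h2
      linarith
  have hint2pos : 0 ≤ ∫ ξ in a..b, q ξ/(p ξ)^2 := by
    apply intervalIntegral.integral_nonneg hab
    intro ξ hξ
    have := hq ξ hξ
    positivity
  have hnorm2 : ‖∫ ξ in a..b,
      Complex.exp (Complex.I * (ψ ξ : ℂ)) * Complex.I * (q ξ : ℂ) / ((p ξ : ℂ))^2‖ ≤ 1/lam := by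
    have hb := intervalIntegral.norm_integral_le_abs_of_norm_le (μ := volume) (a := a) (b := b)
      (f := fun ξ => Complex.exp (Complex.I * (ψ ξ : ℂ)) * Complex.I * (q ξ : ℂ) / ((p ξ : ℂ))^2)
      (g := fun ξ => q ξ/(p ξ)^2) ?_ hqint
    · refine le_trans hb ?_
      rw [abs_of_nonneg hint2pos, hftc2]
      exact hcorr
    · filter_upwards [ae_restrict_mem measurableSet_uIoc] with ξ hξ
      have hξ' : ξ ∈ Icc a b := by
        rw [uIoc_of_le hab] at hξ
        exact Ioc_subset_Icc_self hξ
      have hqξ := hq ξ hξ'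
      have heq : ‖Complex.exp (Complex.I * (ψ ξ : ℂ)) * Complex.I * (q ξ : ℂ) / ((p ξ : ℂ))^2‖
          = q ξ / (p ξ)^2 := by
        rw [norm_div, norm_mul, norm_mul]
        simp only [Complex.norm_exp, Complex.norm_I, Complex.norm_real, Real.norm_eq_abs, norm_pow]
        rw [show (Complex.I * ((ψ ξ : ℂ))).re = 0 by simp, Real.exp_zero]
        rw [abs_of_nonneg hqξ, sq_abs]
        ring
      rw [heq]
  -- final combination
  rw [hmain]
  have hFa := hFbound a hmem_a
  have hFb := hFbound b hmem_b
  have h1 := norm_sub_le (E := ℂ) (F b - F a)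
    (∫ ξ in a..b, Complex.exp (Complex.I * (ψ ξ : ℂ)) * Complex.I * (q ξ : ℂ) / ((p ξ : ℂ))^2)
  have h2 := norm_sub_le (F b) (F a)
  have h3 : 3/lam = 1/lam + 1/lam + 1/lam := by ring
  linarith [hnorm2]

lemma conj_intervalIntegral (f : ℝ → ℂ) (a b : ℝ) :
    ∫ ξ in a..b, (starRingEnd ℂ) (f ξ) = (starRingEnd ℂ) (∫ ξ in a..b, f ξ) := by
  rw [intervalIntegral, intervalIntegral, integral_conj, integral_conj, ← map_sub]

set_option maxHeartbeats 1000000 in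
theorem oscillatory_integral_boussinesq_small_time :
    ∃ C : ℝ, 0 < C ∧ ∀ x t : ℝ, 0 < t → t ≤ 1 →
      ∃ L : ℂ,
        Tendsto
          (fun R : ℝ => ∫ ξ in (-R)..R,
            Complex.exp (Complex.I * ((x : ℂ) * (ξ : ℂ) +
              (t : ℂ) * (ξ : ℂ) * (Real.sqrt (1 + ξ ^ 2) : ℂ))))
          atTop (nhds L) ∧
        ‖L‖ ≤ C * t ^ (-(1 : ℝ) / 2) := by
  refine ⟨18, by norm_num, ?_⟩
  intro x t ht ht1
  set φ : ℝ → ℝ := fun u => x*u + t*u*Real.sqrt (1+u^2) with hφdef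
  set p : ℝ → ℝ := fun u => x + t*(1+2*u^2)/Real.sqrt (1+u^2) with hpdef
  set q : ℝ → ℝ := fun u => t*u*(3+2*u^2)/((1+u^2)*Real.sqrt (1+u^2)) with hqdef
  have hψ : ∀ ξ, HasDerivAt φ (p ξ) ξ := fun ξ => hasDerivAt_phi x t ξ
  have hp' : ∀ ξ, HasDerivAt p (q ξ) ξ := fun ξ => hasDerivAt_p x t ξ
  have hsc : Continuous fun u : ℝ => Real.sqrt (1+u^2) :=
    Real.continuous_sqrt.comp (by continuity)
  have hqc : Continuous q := by
    apply Continuous.div (by continuity) (Continuous.mul (by continuity) hsc)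
    intro u
    have : 0 < Real.sqrt (1+u^2) := Real.sqrt_pos.mpr (by positivity)
    exact mul_ne_zero (by positivity) this.ne'
  have hpc : Continuous p := by
    rw [continuous_iff_continuousAt]; exact fun ξ => (hp' ξ).continuousAt
  have hφc : Continuous φ := by
    rw [continuous_iff_continuousAt]; exact fun ξ => (hψ ξ).continuousAt
  have hq0 : ∀ ξ : ℝ, 0 ≤ ξ → 0 ≤ q ξ := by
    intro ξ hξ
    rw [hqdef]
    have : 0 < Real.sqrt (1+ξ^2) := Real.sqrt_pos.mpr (by positivity)
    positivity
  have hqt : ∀ ξ : ℝ, 1 ≤ ξ → t ≤ q ξ := by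
    intro ξ hξ
    rw [hqdef]
    have hs0 : 0 < Real.sqrt (1+ξ^2) := Real.sqrt_pos.mpr (by positivity)
    have hs2 : Real.sqrt (1+ξ^2)^2 = 1+ξ^2 := Real.sq_sqrt (by positivity)
    set s := Real.sqrt (1+ξ^2)
    have hB : 0 < (1+ξ^2)*s := by positivity
    have key : (1+ξ^2)*s ≤ ξ*(3+2*ξ^2) := by
      nlinarith [sq_nonneg (ξ*(3+2*ξ^2) - (1+ξ^2)*s), sq_nonneg (ξ*(3+2*ξ^2) + (1+ξ^2)*s),
        sq_nonneg ξ, sq_nonneg (ξ^2-1), hs0, hs2]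
    rw [le_div_iff₀ hB]
    nlinarith [key]
  have hptd : ∀ ξ : ℝ, HasDerivAt (fun u => p u - t*u) (q ξ - t) ξ := by
    intro ξ
    exact (hp' ξ).sub (by simpa using (hasDerivAt_id ξ).const_mul t)
  have hmono0 : MonotoneOn (fun u => p u - t*u) (Ici 1) := by
    apply monotoneOn_of_deriv_nonneg (convex_Ici 1)
      (Continuous.continuousOn (by exact hpc.sub (by continuity)))
    · exact fun ξ _ => (hptd ξ).differentiableAt.differentiableWithinAt
    · intro ξ hξ
      rw [(hptd ξ).deriv]
      rw [interior_Ici] at hξ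
      linarith [hqt ξ (le_of_lt hξ)]
  have hmono : ∀ u v : ℝ, 1 ≤ u → u ≤ v → p u + t*(v-u) ≤ p v := by
    intro u v hu huv
    have := hmono0 (mem_Ici.mpr hu) (mem_Ici.mpr (le_trans hu huv)) huv
    simp only at this
    nlinarith [this]
  have hgrow : ∀ ξ : ℝ, 0 ≤ ξ → x + t*ξ ≤ p ξ := by
    intro ξ hξ
    rw [hpdef]
    have hs0 : 0 < Real.sqrt (1+ξ^2) := Real.sqrt_pos.mpr (by positivity)
    have hs2 : Real.sqrt (1+ξ^2)^2 = 1+ξ^2 := Real.sq_sqrt (by positivity)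
    set s := Real.sqrt (1+ξ^2)
    have hξs : ξ ≤ s := by nlinarith [hs2, hs0]
    have : t*ξ ≤ t*(1+2*ξ^2)/s := by
      rw [le_div_iff₀ hs0]
      have h1 : ξ*s ≤ s*s := mul_le_mul_of_nonneg_right hξs hs0.le
      have h2 : t*(s*s) = t*(1+ξ^2) := by rw [← hs2]; ring
      nlinarith [mul_le_mul_of_nonneg_left h1 ht.le, h2, mul_nonneg ht.le (sq_nonneg ξ)]
    simp only
    linarith
  set lam := Real.sqrt t with hlamdef
  have hlam : 0 < lam := Real.sqrt_pos.mpr ht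
  have hlam1 : lam ≤ 1 := by
    rw [hlamdef, show (1:ℝ) = Real.sqrt 1 by simp]
    exact Real.sqrt_le_sqrt ht1
  have hlamsq : lam^2 = t := Real.sq_sqrt ht.le
  set f : ℝ → ℂ := fun ξ => Complex.exp (Complex.I * (φ ξ : ℂ)) with hfdef
  have hfc : Continuous f :=
    Complex.continuous_exp.comp (continuous_const.mul (Complex.continuous_ofReal.comp hφc))
  have hfnorm : ∀ ξ : ℝ, ‖f ξ‖ = 1 := by
    intro ξ
    rw [hfdef]
    simp [Complex.norm_exp]
  have hfint : ∀ a b : ℝ, IntervalIntegrable f volume a b := fun a b => hfc.intervalIntegrable a b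
  have htriv : ∀ a b : ℝ, a ≤ b → ‖∫ ξ in a..b, f ξ‖ ≤ b - a := by
    intro a b hab
    have := intervalIntegral.norm_integral_le_of_norm_le_const (a := a) (b := b) (C := 1)
      (f := f) (fun ξ _ => le_of_eq (hfnorm ξ))
    rw [one_mul, abs_of_nonneg (by linarith)] at this
    exact this
  have hM0 : ∃ M0 : ℝ, 1 ≤ M0 ∧ lam ≤ p M0 := by
    refine ⟨max 1 ((lam - x)/t), le_max_left _ _, ?_⟩
    have h1 : (lam - x)/t ≤ max 1 ((lam - x)/t) := le_max_right _ _
    have h2 : 0 ≤ max 1 ((lam - x)/t) := le_trans zero_le_one (le_max_left _ _)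
    have h3 := hgrow _ h2
    have h4 : lam - x ≤ t * max 1 ((lam - x)/t) := by
      rw [← div_le_iff₀' ht]
      exact h1
    linarith
  obtain ⟨M0, hM01, hM0lam⟩ := hM0
  have hexists : ∃ a b : ℝ, 1 ≤ a ∧ a ≤ b ∧ t*(b-a) ≤ 2*lam ∧ lam ≤ p b ∧
      ‖∫ ξ in (1:ℝ)..a, f ξ‖ ≤ 3/lam := by
    by_cases hc1 : lam ≤ p 1
    · refine ⟨1, 1, le_refl _, le_refl _, by rw [sub_self, mul_zero]; positivity, hc1, ?_⟩
      simp only [intervalIntegral.integral_same]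
      rw [norm_zero]
      positivity
    · push_neg at hc1
      have hivt := intermediate_value_Icc hM01 hpc.continuousOn
      obtain ⟨b, hbmem, hpb⟩ := hivt ⟨hc1.le, hM0lam⟩
      have hb1 : 1 ≤ b := hbmem.1
      by_cases hc2 : -lam ≤ p 1
      · refine ⟨1, b, le_refl _, hb1, ?_, le_of_eq hpb.symm, ?_⟩
        · have := hmono 1 b le_rfl hb1
          rw [hpb] at this
          linarith
        · simp only [intervalIntegral.integral_same]
          rw [norm_zero]
          positivity
      · push_neg at hc2
        have hivt2 := intermediate_value_Icc hb1 hpc.continuousOn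
        obtain ⟨a, hamem, hpa⟩ := hivt2 ⟨hc2.le, by rw [hpb]; linarith⟩
        refine ⟨a, b, hamem.1, hamem.2, ?_, le_of_eq hpb.symm, ?_⟩
        · have := hmono a b hamem.1 hamem.2
          rw [hpa, hpb] at this
          linarith
        · apply ibp_bound φ p q 1 a lam hamem.1 hlam hψ hp' hqc
          · exact fun ξ hξ => hq0 ξ (by linarith [hξ.1])
          · right
            intro ξ hξ
            have h5 := hmono ξ a hξ.1 hξ.2
            rw [hpa] at h5
            nlinarith [h5, mul_nonneg ht.le (sub_nonneg.mpr hξ.2)]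
  obtain ⟨a, b, h1a, hab, hgap, hpb, habs1a⟩ := hexists
  have hb1 : 1 ≤ b := le_trans h1a hab
  have hpge : ∀ u v : ℝ, 1 ≤ u → u ≤ v → p u ≤ p v := by
    intro u v hu huv
    have := hmono u v hu huv
    nlinarith [mul_nonneg ht.le (sub_nonneg.mpr huv)]
  set J : ℝ → ℂ := fun R => ∫ ξ in (0:ℝ)..R, f ξ with hJdef
  clear_value φ p q lam f J
  have hJsub : ∀ N n : ℝ, J n - J N = ∫ ξ in N..n, f ξ := by
    intro N n
    have h := intervalIntegral.integral_add_adjacent_intervals (hfint 0 N) (hfint N n)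
    rw [hJdef]
    simp only
    rw [← h]
    ring
  have htail : ∀ N n : ℝ, b ≤ N → N ≤ n → ‖∫ ξ in N..n, f ξ‖ ≤ 3 / p N := by
    intro N n hbN hNn
    have hpN : 0 < p N := lt_of_lt_of_le hlam (le_trans hpb (hpge b N hb1 hbN))
    rw [hfdef]
    apply ibp_bound φ p q N n (p N) hNn hpN hψ hp' hqc
    · exact fun ξ hξ => hq0 ξ (by linarith [hξ.1, hb1, hbN])
    · left
      exact fun ξ hξ => hpge N ξ (by linarith) hξ.1
  have hcauchy : CauchySeq J := by
    rw [Metric.cauchySeq_iff']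
    intro ε hε
    set N := max b (max 1 ((3/ε + 1 - x)/t)) with hN
    have hbN : b ≤ N := le_max_left _ _
    have hN0 : 0 ≤ N := le_trans zero_le_one (le_trans (le_max_left _ _) (le_max_right _ _))
    have h1 : (3/ε + 1 - x)/t ≤ N := le_trans (le_max_right _ _) (le_max_right _ _)
    clear_value N
    have hpN : 3/ε + 1 ≤ p N := by
      have h2 : 3/ε + 1 - x ≤ t * N := by rw [← div_le_iff₀' ht]; exact h1
      have h3 := hgrow N hN0
      linarith only [h2, h3]
    refine ⟨N, fun n hn => ?_⟩
    rw [dist_eq_norm, hJsub N n]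
    have h30 : (0:ℝ) < 3/ε + 1 := by
      have := div_pos (by norm_num : (0:ℝ) < 3) hε
      linarith
    have hpN0 : 0 < p N := lt_of_lt_of_le h30 hpN
    calc ‖∫ ξ in N..n, f ξ‖ ≤ 3 / p N := htail N n hbN hn
      _ < ε := by
        rw [div_lt_iff₀ hpN0]
        have h3 : (3/ε) * ε = 3 := div_mul_cancel₀ 3 hε.ne'
        nlinarith [mul_le_mul_of_nonneg_left hpN hε.le, h3]
  obtain ⟨L0, hL0⟩ := cauchySeq_tendsto_of_complete hcauchy
  have hJbound : ∀ R : ℝ, b ≤ R →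
      ‖J R‖ ≤ 1 + 3/lam + 2*lam/t + 3/lam := by
    intro R hbR
    have e1 := intervalIntegral.integral_add_adjacent_intervals (hfint 0 1) (hfint 1 a)
    have e2 := intervalIntegral.integral_add_adjacent_intervals (hfint 0 a) (hfint a b)
    have e3 := intervalIntegral.integral_add_adjacent_intervals (hfint 0 b) (hfint b R)
    have hsplit : J R = (∫ ξ in (0:ℝ)..1, f ξ) + (∫ ξ in (1:ℝ)..a, f ξ)
        + (∫ ξ in a..b, f ξ) + (∫ ξ in b..R, f ξ) := by
      rw [hJdef]
      simp only
      rw [← e3, ← e2, ← e1]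
    rw [hsplit]
    have t1 : ‖∫ ξ in (0:ℝ)..1, f ξ‖ ≤ 1 := by
      simpa using htriv 0 1 zero_le_one
    have t3 : ‖∫ ξ in a..b, f ξ‖ ≤ 2*lam/t := by
      refine le_trans (htriv a b hab) ?_
      rw [le_div_iff₀ ht]
      nlinarith [hgap]
    have t4 : ‖∫ ξ in b..R, f ξ‖ ≤ 3/lam := by
      refine le_trans (htail b R le_rfl hbR) ?_
      have hpbpos : 0 < p b := lt_of_lt_of_le hlam hpb
      gcongr
    have n1 := norm_add_le ((∫ ξ in (0:ℝ)..1, f ξ) + (∫ ξ in (1:ℝ)..a, f ξ)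
        + (∫ ξ in a..b, f ξ)) (∫ ξ in b..R, f ξ)
    have n2 := norm_add_le ((∫ ξ in (0:ℝ)..1, f ξ) + (∫ ξ in (1:ℝ)..a, f ξ)) (∫ ξ in a..b, f ξ)
    have n3 := norm_add_le (∫ ξ in (0:ℝ)..1, f ξ) (∫ ξ in (1:ℝ)..a, f ξ)
    linarith [habs1a]
  have hL0bound : ‖L0‖ ≤ 1 + 3/lam + 2*lam/t + 3/lam := by
    apply le_of_tendsto ((continuous_norm.tendsto L0).comp hL0)
    filter_upwards [eventually_ge_atTop b] with R hR
    exact hJbound R hR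
  -- relate the two-sided integral to J
  have hoddf : ∀ u : ℝ, f (-u) = (starRingEnd ℂ) (f u) := by
    intro u
    have hodd : φ (-u) = - φ u := by
      rw [hφdef]
      simp only
      rw [neg_sq]
      ring
    rw [hfdef]
    simp only
    rw [hodd, ← Complex.exp_conj]
    congr 1
    simp [Complex.conj_I, Complex.conj_ofReal]
  have hfun : (fun R : ℝ => ∫ ξ in (-R)..R,
      Complex.exp (Complex.I * ((x : ℂ) * (ξ : ℂ) +
        (t : ℂ) * (ξ : ℂ) * (Real.sqrt (1 + ξ ^ 2) : ℂ))))
      = fun R => (starRingEnd ℂ) (J R) + J R := by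
    funext R
    have hint : ∀ ξ : ℝ, Complex.exp (Complex.I * ((x : ℂ) * (ξ : ℂ) +
        (t : ℂ) * (ξ : ℂ) * (Real.sqrt (1 + ξ ^ 2) : ℂ))) = f ξ := by
      intro ξ
      rw [hfdef]
      simp only [hφdef]
      push_cast
      ring_nf
    calc (∫ ξ in (-R)..R, Complex.exp (Complex.I * ((x : ℂ) * (ξ : ℂ) +
          (t : ℂ) * (ξ : ℂ) * (Real.sqrt (1 + ξ ^ 2) : ℂ))))
        = ∫ ξ in (-R)..R, f ξ := by simp_rw [hint]
      _ = (∫ ξ in (-R)..(0:ℝ), f ξ) + ∫ ξ in (0:ℝ)..R, f ξ :=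
          (intervalIntegral.integral_add_adjacent_intervals (hfint _ _) (hfint _ _)).symm
      _ = (starRingEnd ℂ) (J R) + J R := by
          congr 1
          have h2 := intervalIntegral.integral_comp_neg (a := (0:ℝ)) (b := R) f
          rw [neg_zero] at h2
          rw [← h2]
          simp_rw [hoddf]
          rw [conj_intervalIntegral]
          simp only [hJdef]
          rw [hJdef]
  refine ⟨(starRingEnd ℂ) L0 + L0, ?_, ?_⟩
  · rw [hfun]
    exact ((Complex.continuous_conj.tendsto L0).comp hL0).add hL0
  · have habs2 : ‖(starRingEnd ℂ) L0 + L0‖ ≤ 2 * ‖L0‖ := by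
      calc ‖(starRingEnd ℂ) L0 + L0‖
          ≤ ‖(starRingEnd ℂ) L0‖ + ‖L0‖ := norm_add_le _ _
        _ = 2 * ‖L0‖ := by rw [Complex.norm_conj]; ring
    have e : 2*lam/t = 2/lam := by
      rw [← hlamsq]
      field_simp
    have h1lam : 2 ≤ 2/lam := by rw [le_div_iff₀ hlam]; linarith
    have h2M : 2 * (1 + 3/lam + 2*lam/t + 3/lam) ≤ 18 / lam := by
      rw [e]
      have e2 : 2*(1+3/lam+2/lam+3/lam) = 2 + 16/lam := by ring
      have e3 : (18:ℝ)/lam = 2/lam + 16/lam := by ring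
      linarith [h1lam]
    have hrpow : (18:ℝ) * t ^ (-(1:ℝ)/2) = 18 / lam := by
      rw [show (-(1:ℝ)/2) = -(1/2 : ℝ) by ring, Real.rpow_neg ht.le, ← Real.sqrt_eq_rpow]
      rw [hlamdef, div_eq_mul_inv]
    rw [hrpow]
    calc ‖(starRingEnd ℂ) L0 + L0‖ ≤ 2 * ‖L0‖ := habs2
      _ ≤ 2 * (1 + 3/lam + 2*lam/t + 3/lam) := by linarith [hL0bound]
      _ ≤ 18 / lam := h2M
end

section
/- There exists a constant C > 0 such that for all real x and all t ≥ 1, |∫_{ℝ} e^{i x ξ + i t ξ√(1+ξ²)} dξ| ≤ C t^{-1/3}. -/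
open Filter Set intervalIntegral

noncomputable def sq1 (ξ : ℝ) : ℝ := Real.sqrt (1 + ξ^2)

lemma sq1_pos (ξ : ℝ) : 0 < sq1 ξ := Real.sqrt_pos.2 (by positivity)

lemma sq1_sq (ξ : ℝ) : sq1 ξ ^ 2 = 1 + ξ^2 := Real.sq_sqrt (by positivity)

lemma hasDerivAt_sq1 (ξ : ℝ) : HasDerivAt sq1 (ξ / sq1 ξ) ξ := by
  have h := (Real.hasDerivAt_sqrt (x := 1 + ξ^2) (by positivity)).comp ξ
    (((hasDerivAt_pow 2 ξ).const_add 1))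
  refine h.congr_deriv ?_
  have := sq1_pos ξ
  simp only [sq1] at *
  field_simp
  ring

noncomputable def ph (x t ξ : ℝ) : ℝ := x * ξ + t * (ξ * sq1 ξ)
noncomputable def ps (x t ξ : ℝ) : ℝ := x + t * ((1 + 2*ξ^2) / sq1 ξ)
noncomputable def ps' (t ξ : ℝ) : ℝ := t * (ξ * (3 + 2*ξ^2) / (sq1 ξ)^3)

lemma hasDerivAt_ph (x t ξ : ℝ) : HasDerivAt (ph x t) (ps x t ξ) ξ := by
  have h : HasDerivAt (fun ξ => ph x t ξ)
      (x * 1 + t * (1 * sq1 ξ + ξ * (ξ / sq1 ξ))) ξ :=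
    ((hasDerivAt_id ξ).const_mul x).add
      (((hasDerivAt_id ξ).mul (hasDerivAt_sq1 ξ)).const_mul t)
  convert h using 1
  have h2 := sq1_sq ξ
  have h0 := (sq1_pos ξ).ne'
  simp only [ps]
  field_simp
  linear_combination (-t) * h2

lemma hasDerivAt_ps (x t ξ : ℝ) : HasDerivAt (ps x t) (ps' t ξ) ξ := by
  have h : HasDerivAt (fun ξ => ps x t ξ)
      (0 + t * (((2 * (↑2 * ξ ^ (2 - 1))) * sq1 ξ - (1 + 2*ξ^2) * (ξ / sq1 ξ)) / (sq1 ξ)^2)) ξ := by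
    refine (hasDerivAt_const ξ x).add (HasDerivAt.const_mul t ?_)
    exact ((((hasDerivAt_pow 2 ξ).const_mul 2).const_add 1).div (hasDerivAt_sq1 ξ) (sq1_pos ξ).ne')
  convert h using 1
  have h2 := sq1_sq ξ
  have h0 := (sq1_pos ξ).ne'
  simp only [ps']
  field_simp
  linear_combination (-4 * t * ξ) * sq1_sq ξ

lemma continuous_sq1 : Continuous sq1 := by
  unfold sq1; fun_prop

lemma continuous_ps (x t : ℝ) : Continuous (ps x t) := by
  unfold ps
  exact continuous_const.add (continuous_const.mul ((Continuous.div (by fun_prop)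
    continuous_sq1 (fun ξ => (sq1_pos ξ).ne'))))

lemma continuous_ps' (t : ℝ) : Continuous (ps' t) := by
  unfold ps'
  exact continuous_const.mul (Continuous.div (by fun_prop) (by fun_prop [sq1])
    (fun ξ => by have := sq1_pos ξ; positivity))

lemma ps'_nonneg {t ξ : ℝ} (ht : 0 ≤ t) (hξ : 0 ≤ ξ) : 0 ≤ ps' t ξ := by
  unfold ps'
  have := sq1_pos ξ
  positivity

lemma ps'_ge {t ξ : ℝ} (ht : 0 ≤ t) (hξ : 0 ≤ ξ) : t * min ξ 1 ≤ ps' t ξ := by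
  have hs := sq1_pos ξ
  have hsq := sq1_sq ξ
  have hkey : min ξ 1 * (sq1 ξ)^3 ≤ ξ * (3 + 2*ξ^2) := by
    rcases le_total ξ 1 with h1 | h1
    · rw [min_eq_left h1]
      have hs32 : sq1 ξ ≤ 3/2 := by nlinarith
      have hcube : sq1 ξ^3 ≤ 3/2*(1+ξ^2) := by nlinarith [pow_nonneg hs.le 2]
      nlinarith [mul_le_mul_of_nonneg_left hcube hξ]
    · rw [min_eq_right h1]
      have hs32 : sq1 ξ ≤ 3/2 * ξ := by nlinarith
      have hcube : sq1 ξ^3 ≤ 3/2*ξ*(1+ξ^2) := by nlinarith [pow_nonneg hs.le 2]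
      nlinarith [hcube]
  have : min ξ 1 ≤ ξ * (3 + 2*ξ^2) / (sq1 ξ)^3 := by
    rw [le_div_iff₀ (by positivity)]
    exact hkey
  calc t * min ξ 1 ≤ t * (ξ * (3 + 2*ξ^2) / (sq1 ξ)^3) := by
        exact mul_le_mul_of_nonneg_left this ht
    _ = ps' t ξ := rfl

lemma ps_sub_eq (x t u v : ℝ) : ps x t v - ps x t u = ∫ s in u..v, ps' t s :=
  ((intervalIntegral.integral_eq_sub_of_hasDerivAt
    (fun s _ => hasDerivAt_ps x t s)
    ((continuous_ps' t).intervalIntegrable u v))).symm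

lemma ps_mono {x t : ℝ} (ht : 0 ≤ t) {u v : ℝ} (hu : 0 ≤ u) (huv : u ≤ v) :
    ps x t u ≤ ps x t v := by
  have h := ps_sub_eq x t u v
  have : 0 ≤ ∫ s in u..v, ps' t s := by
    apply intervalIntegral.integral_nonneg huv
    intro s hs
    exact ps'_nonneg ht (le_trans hu hs.1)
  linarith

lemma ps_gain {x t : ℝ} (ht : 0 ≤ t) {c δ : ℝ} (hc : 0 ≤ c) (hδ : 0 ≤ δ) (hδ1 : δ ≤ 1) :
    ps x t c + t * δ^2 / 2 ≤ ps x t (c + δ) := by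
  have h := ps_sub_eq x t c (c + δ)
  have key : t * δ^2/2 ≤ ∫ s in c..(c+δ), ps' t s := by
    have h1 : ∫ s in c..(c+δ), t * min (s - c) 1 ≤ ∫ s in c..(c+δ), ps' t s := by
      apply intervalIntegral.integral_mono_on (by linarith)
      · exact (Continuous.intervalIntegrable (by fun_prop) c (c+δ))
      · exact (continuous_ps' t).intervalIntegrable c (c+δ)
      · intro s hs
        calc t * min (s - c) 1 ≤ t * min s 1 := by
              apply mul_le_mul_of_nonneg_left _ ht
              exact min_le_min (by linarith) le_rfl
          _ ≤ ps' t s := ps'_ge ht (le_trans hc hs.1)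
    have h2 : (∫ s in c..(c+δ), t * min (s - c) 1) = ∫ u in (0:ℝ)..δ, t * min u 1 := by
      have := intervalIntegral.integral_comp_sub_right (fun u => t * min u 1) c (a := c) (b := c + δ)
      simpa using this
    have h3 : (∫ u in (0:ℝ)..δ, t * min u 1) = ∫ u in (0:ℝ)..δ, t * u := by
      apply intervalIntegral.integral_congr
      intro u hu
      rw [Set.uIcc_of_le hδ] at hu
      simp only [min_eq_left (le_trans hu.2 hδ1)]
    have h4 : (∫ u in (0:ℝ)..δ, t * u) = t * δ^2/2 := by
      rw [intervalIntegral.integral_const_mul, integral_id]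
      ring
    rw [h2, h3, h4] at h1
    exact h1
  linarith

lemma ps_lower {x t : ℝ} (ht : 0 ≤ t) {ξ : ℝ} (hξ : 0 ≤ ξ) : x + t * ξ ≤ ps x t ξ := by
  have hs := sq1_pos ξ
  have hsq := sq1_sq ξ
  have hsle : sq1 ξ ≤ 1 + ξ := by nlinarith
  have : ξ ≤ (1 + 2*ξ^2) / sq1 ξ := by
    rw [le_div_iff₀ hs]
    nlinarith
  unfold ps
  nlinarith [mul_le_mul_of_nonneg_left this ht]

noncomputable def osc (x t ξ : ℝ) : ℂ := Complex.exp (Complex.I * (ph x t ξ : ℂ))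

lemma continuous_osc (x t : ℝ) : Continuous (osc x t) := by
  unfold osc ph sq1; fun_prop

lemma norm_osc (x t ξ : ℝ) : ‖osc x t ξ‖ = 1 := by
  simp [osc, Complex.norm_exp]

lemma hasDerivAt_osc (x t ξ : ℝ) :
    HasDerivAt (osc x t) (Complex.I * (ps x t ξ : ℂ) * osc x t ξ) ξ := by
  have h1 : HasDerivAt (fun ξ : ℝ => ((ph x t ξ : ℝ) : ℂ)) ((ps x t ξ : ℝ) : ℂ) ξ :=
    (hasDerivAt_ph x t ξ).ofReal_comp
  have h2 := (h1.const_mul Complex.I).cexp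
  refine h2.congr_deriv ?_
  simp only [osc]; ring

lemma ibp (x t : ℝ) {a b m : ℝ} (hab : a ≤ b) (hm : 0 < m)
    (hsign : (∀ ξ ∈ Set.Icc a b, m ≤ ps x t ξ) ∨ (∀ ξ ∈ Set.Icc a b, ps x t ξ ≤ -m))
    (hnn : ∀ ξ ∈ Set.Icc a b, 0 ≤ ps' t ξ) :
    ‖∫ ξ in a..b, osc x t ξ‖ ≤ 3 / m := by
  set ψ := ps x t with hψdef
  have hne : ∀ ξ ∈ Set.Icc a b, ψ ξ ≠ 0 := by
    rcases hsign with h | h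
    · intro ξ hξ; have := h ξ hξ; linarith [this]
    · intro ξ hξ; have := h ξ hξ; intro h0; rw [h0] at this; linarith
  have habs : ∀ ξ ∈ Set.Icc a b, m ≤ |ψ ξ| := by
    rcases hsign with h | h
    · intro ξ hξ; have := h ξ hξ; rw [abs_of_pos (by linarith)]; exact this
    · intro ξ hξ; have := h ξ hξ; rw [abs_of_neg (by linarith)]; linarith
  set H : ℝ → ℂ := fun ξ => osc x t ξ / (Complex.I * (ψ ξ : ℂ)) with hHdef
  have hH : ∀ ξ ∈ Set.Icc a b, HasDerivAt H
      (osc x t ξ + Complex.I * osc x t ξ * (ps' t ξ : ℂ) / (ψ ξ : ℂ)^2) ξ := by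
    intro ξ hξ
    have hψne : (ψ ξ : ℂ) ≠ 0 := by exact_mod_cast hne ξ hξ
    have hden : Complex.I * (ψ ξ : ℂ) ≠ 0 := mul_ne_zero Complex.I_ne_zero hψne
    have hdc : HasDerivAt (fun ξ => Complex.I * (ψ ξ : ℂ)) (Complex.I * (ps' t ξ : ℂ)) ξ :=
      ((hasDerivAt_ps x t ξ).ofReal_comp).const_mul Complex.I
    have h := (hasDerivAt_osc x t ξ).div hdc hden
    refine h.congr_deriv ?_; symm
    have hI3 : Complex.I ^ 3 = -Complex.I := by
      rw [pow_succ, Complex.I_sq]; ring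
    field_simp
    ring_nf
    rw [Complex.I_sq, hψdef]
    ring
  have hcont : ContinuousOn (fun ξ => osc x t ξ + Complex.I * osc x t ξ * (ps' t ξ : ℂ) / (ψ ξ : ℂ)^2)
      (Set.Icc a b) := by
    apply ContinuousOn.add (continuous_osc x t).continuousOn
    apply ContinuousOn.div
    · exact ((continuous_const.mul (continuous_osc x t)).mul
        (Complex.continuous_ofReal.comp (continuous_ps' t) :
          Continuous fun ξ => ((ps' t ξ : ℝ) : ℂ))).continuousOn
    · exact ((Complex.continuous_ofReal.comp (continuous_ps x t)).pow 2).continuousOn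
    · intro ξ hξ
      have : (ψ ξ : ℂ) ≠ 0 := by exact_mod_cast hne ξ hξ
      simpa using pow_ne_zero 2 this
  have h1 : ∫ ξ in a..b, (osc x t ξ + Complex.I * osc x t ξ * (ps' t ξ : ℂ) / (ψ ξ : ℂ)^2)
      = H b - H a := by
    apply intervalIntegral.integral_eq_sub_of_hasDerivAt
    · intro ξ hξ; exact hH ξ (by rwa [Set.uIcc_of_le hab] at hξ)
    · exact (hcont.mono (by rw [Set.uIcc_of_le hab])).intervalIntegrable
  have hint2 : IntervalIntegrable (fun ξ => Complex.I * osc x t ξ * (ps' t ξ : ℂ) / (ψ ξ : ℂ)^2)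
      MeasureTheory.volume a b := by
    apply ContinuousOn.intervalIntegrable
    rw [Set.uIcc_of_le hab]
    apply ContinuousOn.div
    · exact ((continuous_const.mul (continuous_osc x t)).mul
        (Complex.continuous_ofReal.comp (continuous_ps' t) :
          Continuous fun ξ => ((ps' t ξ : ℝ) : ℂ))).continuousOn
    · exact ((Complex.continuous_ofReal.comp (continuous_ps x t)).pow 2).continuousOn
    · intro ξ hξ
      have : (ψ ξ : ℂ) ≠ 0 := by exact_mod_cast hne ξ hξ
      simpa using pow_ne_zero 2 this
  have hsplit : (∫ ξ in a..b, osc x t ξ) =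
      H b - H a - ∫ ξ in a..b, Complex.I * osc x t ξ * (ps' t ξ : ℂ) / (ψ ξ : ℂ)^2 := by
    rw [← h1, intervalIntegral.integral_add ((continuous_osc x t).intervalIntegrable a b) hint2]
    ring
  -- bound ∫ ψ'/ψ²
  have hG : ∫ ξ in a..b, ps' t ξ / (ψ ξ)^2 = (ψ a)⁻¹ - (ψ b)⁻¹ := by
    have : ∀ ξ ∈ Set.uIcc a b, HasDerivAt (fun ξ => -(ψ ξ)⁻¹) (ps' t ξ / (ψ ξ)^2) ξ := by
      intro ξ hξ
      rw [Set.uIcc_of_le hab] at hξ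
      have h := ((hasDerivAt_ps x t ξ).inv (hne ξ hξ)).neg
      refine h.congr_deriv ?_; symm
      field_simp
      rfl
    have hci : IntervalIntegrable (fun ξ => ps' t ξ / (ψ ξ)^2) MeasureTheory.volume a b := by
      apply ContinuousOn.intervalIntegrable
      rw [Set.uIcc_of_le hab]
      apply ContinuousOn.div (continuous_ps' t).continuousOn
        ((continuous_ps x t).pow 2).continuousOn
      intro ξ hξ
      simpa using pow_ne_zero 2 (hne ξ hξ)
    have := intervalIntegral.integral_eq_sub_of_hasDerivAt this hci
    rw [this]; ring
  have hGle : ∫ ξ in a..b, ps' t ξ / (ψ ξ)^2 ≤ 1 / m := by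
    rw [hG]
    rcases hsign with h | h
    · have ha' := h a ⟨le_refl a, hab⟩
      have hb' := h b ⟨hab, le_refl b⟩
      have : 0 < ψ b := by linarith
      have h1 : (ψ a)⁻¹ ≤ 1/m := by
        rw [div_eq_inv_mul, mul_one]
        exact inv_anti₀ hm ha'
      have h2 : 0 < (ψ b)⁻¹ := by positivity
      linarith
    · have ha' := h a ⟨le_refl a, hab⟩
      have hb' := h b ⟨hab, le_refl b⟩
      have h1 : -(ψ b)⁻¹ ≤ 1/m := by
        rw [div_eq_inv_mul, mul_one, ← inv_neg]
        exact inv_anti₀ hm (by linarith)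
      have h2 : (ψ a)⁻¹ < 0 := inv_lt_zero.mpr (by linarith)
      linarith
  have hci' : IntervalIntegrable (fun ξ => ps' t ξ / (ψ ξ)^2) MeasureTheory.volume a b := by
    apply ContinuousOn.intervalIntegrable
    rw [Set.uIcc_of_le hab]
    apply ContinuousOn.div (continuous_ps' t).continuousOn
      ((continuous_ps x t).pow 2).continuousOn
    intro ξ hξ
    simpa using pow_ne_zero 2 (hne ξ hξ)
  have hGnn : 0 ≤ ∫ ξ in a..b, ps' t ξ / (ψ ξ)^2 := by
    apply intervalIntegral.integral_nonneg hab
    intro ξ hξ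
    have h1 := hnn ξ hξ
    positivity
  have h4 : ‖∫ ξ in a..b, Complex.I * osc x t ξ * (ps' t ξ : ℂ) / (ψ ξ : ℂ)^2‖ ≤ 1/m := by
    have hle : ‖∫ ξ in a..b, Complex.I * osc x t ξ * (ps' t ξ : ℂ) / (ψ ξ : ℂ)^2‖
        ≤ |∫ ξ in a..b, ps' t ξ / (ψ ξ)^2| := by
      apply intervalIntegral.norm_integral_le_abs_of_norm_le _ hci'
      filter_upwards [MeasureTheory.ae_restrict_mem measurableSet_uIoc] with ξ hξ
      have hξ' : ξ ∈ Set.Icc a b := by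
        rw [Set.uIoc_of_le hab] at hξ
        exact ⟨hξ.1.le, hξ.2⟩
      have : ‖Complex.I * osc x t ξ * (ps' t ξ : ℂ) / (ψ ξ : ℂ)^2‖
          = ps' t ξ / (ψ ξ)^2 := by
        rw [norm_div, norm_mul, norm_mul, norm_osc]
        simp [Complex.norm_real, abs_of_nonneg (hnn ξ hξ'), sq_abs]
      rw [this]
    rw [abs_of_nonneg hGnn] at hle
    linarith
  -- bound H
  have hHb : ∀ ξ ∈ Set.Icc a b, ‖H ξ‖ ≤ 1/m := by
    intro ξ hξ
    have hne' := hne ξ hξ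
    have habs' := habs ξ hξ
    have : ‖H ξ‖ = 1 / |ψ ξ| := by
      rw [hHdef]
      simp only [norm_div, norm_mul, norm_osc, Complex.norm_I,
        Complex.norm_real, Real.norm_eq_abs, one_mul]
    rw [this]
    apply div_le_div_of_nonneg_left one_pos.le hm habs'
  calc ‖∫ ξ in a..b, osc x t ξ‖
      ≤ ‖H b‖ + ‖H a‖ + ‖∫ ξ in a..b, Complex.I * osc x t ξ * (ps' t ξ : ℂ) / (ψ ξ : ℂ)^2‖ := by
        rw [hsplit]
        calc ‖H b - H a - _‖ ≤ ‖H b - H a‖ + ‖_‖ := norm_sub_le _ _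
          _ ≤ ‖H b‖ + ‖H a‖ + _ := by gcongr; exact norm_sub_le _ _
    _ ≤ 1/m + 1/m + 1/m := by
        gcongr <;> first
          | exact hHb b ⟨hab, le_refl b⟩
          | exact hHb a ⟨le_refl a, hab⟩
          | exact h4
    _ = 3/m := by ring

lemma exists_xi0 (x t : ℝ) (ht : 1 ≤ t) :
    ∃ ξ0 : ℝ, 0 ≤ ξ0 ∧ 0 ≤ ps x t ξ0 ∧ (ps x t ξ0 ≤ 0 ∨ ξ0 = 0) := by
  have tpos : (0:ℝ) < t := lt_of_lt_of_le one_pos ht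
  rcases le_or_gt 0 (ps x t 0) with h0 | h0
  · exact ⟨0, le_refl 0, h0, Or.inr rfl⟩
  · have hx : x + t < 0 := by
      have : ps x t 0 = x + t := by
        unfold ps sq1
        norm_num
      linarith [this ▸ h0]
    set M := (1 - x) / t with hM
    have hM0 : 0 ≤ M := by
      apply div_nonneg _ tpos.le
      nlinarith
    have hpsM : 0 < ps x t M := by
      have h1 := ps_lower (x := x) tpos.le hM0
      have : t * M = 1 - x := by
        rw [hM]; field_simp
      nlinarith
    have := intermediate_value_Icc hM0 (continuous_ps x t).continuousOn
    have h0mem : (0:ℝ) ∈ Set.Icc (ps x t 0) (ps x t M) := ⟨h0.le, hpsM.le⟩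
    obtain ⟨ξ0, hξ0, hval⟩ := this h0mem
    exact ⟨ξ0, hξ0.1, le_of_eq hval.symm, Or.inl (le_of_eq hval)⟩

lemma half_bound (x t : ℝ) (ht : 1 ≤ t) :
    ∃ ξ0 : ℝ, 0 ≤ ξ0 ∧
      (∀ R, 0 ≤ R → ‖∫ ξ in (0:ℝ)..R, osc x t ξ‖ ≤ 14 * t ^ (-(1:ℝ)/3)) ∧
      (∀ R1 R2, ξ0 + 1 ≤ R1 → R1 ≤ R2 →
        ‖∫ ξ in R1..R2, osc x t ξ‖ ≤ 3 / ps x t R1 ∧ 0 < ps x t R1) := by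
  have tpos : (0:ℝ) < t := lt_of_lt_of_le one_pos ht
  set δ := t ^ (-(1:ℝ)/3) with hδdef
  have δpos : 0 < δ := Real.rpow_pos_of_pos tpos _
  have δ1 : δ ≤ 1 := Real.rpow_le_one_of_one_le_of_nonpos ht (by norm_num)
  have htδ3 : t * δ^3 = 1 := by
    have h1 : δ ^ (3:ℕ) = t ^ (-(1:ℝ)) := by
      rw [hδdef, ← Real.rpow_natCast (t ^ (-(1:ℝ)/3)) 3, ← Real.rpow_mul tpos.le]
      norm_num
    rw [h1, Real.rpow_neg_one]
    field_simp
  set m := t * δ^2/2 with hmdef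
  have mpos : 0 < m := by positivity
  have h3m : 3/m = 6*δ := by
    rw [hmdef]
    rw [div_eq_iff (by positivity : t * δ^2/2 ≠ 0)]
    linear_combination (-3) * htδ3
  obtain ⟨ξ0, hξ0nn, hps0nn, hps0⟩ := exists_xi0 x t ht
  have hb : ∀ ξ, ξ0 + δ ≤ ξ → m ≤ ps x t ξ := by
    intro ξ hξ
    have h1 := ps_gain (x := x) tpos.le hξ0nn δpos.le δ1
    have h2 := ps_mono (x := x) tpos.le (by linarith : (0:ℝ) ≤ ξ0 + δ) hξ
    linarith
  have ha : δ ≤ ξ0 → ∀ ξ, 0 ≤ ξ → ξ ≤ ξ0 - δ → ps x t ξ ≤ -m := by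
    intro hδξ0 ξ hξnn hξ
    have hps0' : ps x t ξ0 ≤ 0 := by
      rcases hps0 with h | h
      · exact h
      · exfalso; rw [h] at hδξ0; linarith
    have h1 := ps_gain (x := x) tpos.le (by linarith : (0:ℝ) ≤ ξ0 - δ) δpos.le δ1
    rw [show ξ0 - δ + δ = ξ0 by ring] at h1
    have h2 := ps_mono (x := x) tpos.le hξnn hξ
    linarith
  have hps'nn : ∀ (u : ℝ), 0 ≤ u → ∀ ξ ∈ Set.Icc u (max u u), True := fun _ _ _ _ => trivial
  have hlen : ∀ a b : ℝ, a ≤ b → ‖∫ ξ in a..b, osc x t ξ‖ ≤ b - a := by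
    intro a b hab
    have h := intervalIntegral.norm_integral_le_of_norm_le_const (a := a) (b := b) (C := 1)
      (f := osc x t) (fun ξ _ => le_of_eq (norm_osc x t ξ))
    rwa [one_mul, abs_of_nonneg (by linarith)] at h
  have hnn' : ∀ (a b : ℝ), 0 ≤ a → ∀ ξ ∈ Set.Icc a b, 0 ≤ ps' t ξ := by
    intro a b ha0 ξ hξ
    exact ps'_nonneg tpos.le (le_trans ha0 hξ.1)
  refine ⟨ξ0, hξ0nn, ?_, ?_⟩
  · intro R hR
    rcases le_or_gt ξ0 δ with hsmall | hbig
    · -- b := ξ0 + δ ≤ 2δ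
      rcases le_total R (ξ0 + δ) with hRb | hRb
      · calc ‖∫ ξ in (0:ℝ)..R, osc x t ξ‖ ≤ R - 0 := hlen 0 R hR
          _ ≤ 14 * δ := by linarith
      · have hsplit : (∫ ξ in (0:ℝ)..R, osc x t ξ)
            = (∫ ξ in (0:ℝ)..(ξ0 + δ), osc x t ξ) + ∫ ξ in (ξ0 + δ)..R, osc x t ξ :=
          (intervalIntegral.integral_add_adjacent_intervals
            ((continuous_osc x t).intervalIntegrable _ _)
            ((continuous_osc x t).intervalIntegrable _ _)).symm
        have h1 : ‖∫ ξ in (0:ℝ)..(ξ0 + δ), osc x t ξ‖ ≤ ξ0 + δ := by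
          have := hlen 0 (ξ0 + δ) (by linarith)
          linarith
        have h2 : ‖∫ ξ in (ξ0 + δ)..R, osc x t ξ‖ ≤ 3/m := by
          apply ibp x t hRb mpos
          · exact Or.inl (fun ξ hξ => hb ξ hξ.1)
          · exact hnn' _ _ (by linarith)
        rw [hsplit]
        calc ‖_ + _‖ ≤ ‖_‖ + ‖_‖ := norm_add_le _ _
          _ ≤ (ξ0 + δ) + 3/m := add_le_add h1 h2
          _ ≤ 14 * δ := by rw [h3m]; linarith
    · -- a := ξ0 - δ > 0
      have ha' := ha hbig.le
      rcases le_total R (ξ0 - δ) with hRa | hRa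
      · have h1 : ‖∫ ξ in (0:ℝ)..R, osc x t ξ‖ ≤ 3/m := by
          apply ibp x t hR mpos
          · exact Or.inr (fun ξ hξ => ha' ξ hξ.1 (by linarith [hξ.2]))
          · exact hnn' _ _ le_rfl
        rw [h3m] at h1
        linarith
      · have hsplit1 : (∫ ξ in (0:ℝ)..R, osc x t ξ)
            = (∫ ξ in (0:ℝ)..(ξ0 - δ), osc x t ξ) + ∫ ξ in (ξ0 - δ)..R, osc x t ξ :=
          (intervalIntegral.integral_add_adjacent_intervals
            ((continuous_osc x t).intervalIntegrable _ _)
            ((continuous_osc x t).intervalIntegrable _ _)).symm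
        have h1 : ‖∫ ξ in (0:ℝ)..(ξ0 - δ), osc x t ξ‖ ≤ 3/m := by
          apply ibp x t (by linarith) mpos
          · exact Or.inr (fun ξ hξ => ha' ξ hξ.1 hξ.2)
          · exact hnn' _ _ le_rfl
        rcases le_total R (ξ0 + δ) with hRb | hRb
        · have h2 : ‖∫ ξ in (ξ0 - δ)..R, osc x t ξ‖ ≤ R - (ξ0 - δ) := hlen _ _ hRa
          rw [hsplit1]
          calc ‖_ + _‖ ≤ ‖_‖ + ‖_‖ := norm_add_le _ _
            _ ≤ 3/m + (R - (ξ0 - δ)) := add_le_add h1 h2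
            _ ≤ 14 * δ := by rw [h3m]; linarith
        · have hsplit2 : (∫ ξ in (ξ0 - δ)..R, osc x t ξ)
              = (∫ ξ in (ξ0 - δ)..(ξ0 + δ), osc x t ξ) + ∫ ξ in (ξ0 + δ)..R, osc x t ξ :=
            (intervalIntegral.integral_add_adjacent_intervals
              ((continuous_osc x t).intervalIntegrable _ _)
              ((continuous_osc x t).intervalIntegrable _ _)).symm
          have h2 : ‖∫ ξ in (ξ0 - δ)..(ξ0 + δ), osc x t ξ‖ ≤ 2*δ := by
            have := hlen (ξ0 - δ) (ξ0 + δ) (by linarith)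
            linarith
          have h3 : ‖∫ ξ in (ξ0 + δ)..R, osc x t ξ‖ ≤ 3/m := by
            apply ibp x t hRb mpos
            · exact Or.inl (fun ξ hξ => hb ξ hξ.1)
            · exact hnn' _ _ (by linarith)
          rw [hsplit1, hsplit2]
          calc ‖_ + (_ + _)‖ ≤ ‖_‖ + ‖_ + _‖ := norm_add_le _ _
            _ ≤ ‖_‖ + (‖_‖ + ‖_‖) := by gcongr; exact norm_add_le _ _
            _ ≤ 3/m + (2*δ + 3/m) := by
                gcongr <;> first | exact h1 | exact h2 | exact h3
            _ ≤ 14 * δ := by rw [h3m]; linarith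
  · intro R1 R2 hR1 hR12
    have hR1nn : 0 ≤ R1 := by linarith
    have hps1 : m ≤ ps x t R1 := hb R1 (by linarith)
    have hpos1 : 0 < ps x t R1 := lt_of_lt_of_le mpos hps1
    refine ⟨?_, hpos1⟩
    apply ibp x t hR12 hpos1
    · exact Or.inl (fun ξ hξ => ps_mono tpos.le hR1nn hξ.1)
    · exact hnn' _ _ hR1nn

lemma interval_conj (f : ℝ → ℂ) (a b : ℝ) :
    ∫ x in a..b, (starRingEnd ℂ) (f x) = (starRingEnd ℂ) (∫ x in a..b, f x) := by
  rw [intervalIntegral, intervalIntegral, integral_conj, integral_conj, map_sub]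

lemma osc_neg (x t ξ : ℝ) : osc x t (-ξ) = (starRingEnd ℂ) (osc x t ξ) := by
  have hph : ph x t (-ξ) = -(ph x t ξ) := by
    unfold ph sq1
    ring_nf
  rw [osc, osc, hph, ← Complex.exp_conj]
  congr 1
  simp [Complex.ext_iff]

lemma reflect (x t a b : ℝ) :
    ∫ ξ in (-b)..(-a), osc x t ξ = (starRingEnd ℂ) (∫ ξ in a..b, osc x t ξ) := by
  rw [← intervalIntegral.integral_comp_neg (osc x t), ← interval_conj]
  exact intervalIntegral.integral_congr (fun ξ _ => osc_neg x t ξ)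

theorem oscillatory_integral_boussinesq_large_time :
    ∃ C : ℝ, 0 < C ∧ ∀ x t : ℝ, 1 ≤ t →
      ∃ L : ℂ,
        Tendsto
          (fun R : ℝ => ∫ ξ in (-R)..R,
            Complex.exp (Complex.I * ((x : ℂ) * (ξ : ℂ) +
              (t : ℂ) * (ξ : ℂ) * (Real.sqrt (1 + ξ ^ 2) : ℂ))))
          atTop (nhds L) ∧
        ‖L‖ ≤ C * t ^ (-(1 : ℝ) / 3) := by
  refine ⟨28, by norm_num, ?_⟩
  intro x t ht
  have tpos : (0:ℝ) < t := lt_of_lt_of_le one_pos ht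
  have hfun : (fun R : ℝ => ∫ ξ in (-R)..R,
      Complex.exp (Complex.I * ((x : ℂ) * (ξ : ℂ) +
        (t : ℂ) * (ξ : ℂ) * (Real.sqrt (1 + ξ ^ 2) : ℂ))))
      = fun R : ℝ => ∫ ξ in (-R)..R, osc x t ξ := by
    funext R
    apply intervalIntegral.integral_congr
    intro ξ _
    have h : ((ph x t ξ : ℝ) : ℂ)
        = (x : ℂ) * (ξ : ℂ) + (t : ℂ) * (ξ : ℂ) * (Real.sqrt (1 + ξ ^ 2) : ℂ) := by
      unfold ph sq1
      push_cast
      ring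
    rw [osc, h]
  rw [hfun]
  set F : ℝ → ℂ := fun R => ∫ ξ in (-R)..R, osc x t ξ with hF
  set I : ℝ → ℂ := fun R => ∫ ξ in (0:ℝ)..R, osc x t ξ with hI
  have hFI : ∀ R : ℝ, F R = I R + (starRingEnd ℂ) (I R) := by
    intro R
    have hsplit : F R = (∫ ξ in (-R)..(0:ℝ), osc x t ξ) + ∫ ξ in (0:ℝ)..R, osc x t ξ :=
      (intervalIntegral.integral_add_adjacent_intervals
        ((continuous_osc x t).intervalIntegrable _ _)
        ((continuous_osc x t).intervalIntegrable _ _)).symm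
    have hrefl := reflect x t 0 R
    rw [neg_zero] at hrefl
    rw [hsplit, hrefl]
    ring
  obtain ⟨ξ0, hξ0nn, hbound, htail⟩ := half_bound x t ht
  -- Cauchy
  have hcauchy : CauchySeq F := by
    rw [Metric.cauchySeq_iff']
    intro ε hε
    set N := max (ξ0 + 1) ((7/ε - x)/t) with hN
    refine ⟨N, ?_⟩
    intro R hR
    have hN1 : ξ0 + 1 ≤ N := le_max_left _ _
    have hN2 : (7/ε - x)/t ≤ N := le_max_right _ _
    obtain ⟨htb, hpspos⟩ := htail N R hN1 hR
    have hpsge : 7/ε ≤ ps x t N := by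
      have h1 := ps_lower (x := x) tpos.le (by linarith : (0:ℝ) ≤ N)
      have h2 : 7/ε - x ≤ t * N := by
        rw [div_le_iff₀ tpos] at hN2
        linarith [hN2]
      linarith
    have hepos : 0 < 7/ε := by positivity
    have htb2 : ‖∫ ξ in N..R, osc x t ξ‖ ≤ 3 / (7/ε) := by
      refine le_trans htb ?_
      apply div_le_div_of_nonneg_left (by norm_num) (by positivity) hpsge
    have hIRN : I R - I N = ∫ ξ in N..R, osc x t ξ :=
      (intervalIntegral.integral_interval_sub_left
        ((continuous_osc x t).intervalIntegrable _ _)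
        ((continuous_osc x t).intervalIntegrable _ _))
    rw [dist_eq_norm]
    have : F R - F N = (I R - I N) + (starRingEnd ℂ) (I R - I N) := by
      rw [hFI R, hFI N, map_sub]; ring
    rw [this, hIRN]
    calc ‖_ + _‖ ≤ ‖∫ ξ in N..R, osc x t ξ‖ + ‖(starRingEnd ℂ) (∫ ξ in N..R, osc x t ξ)‖ :=
          norm_add_le _ _
      _ = 2 * ‖∫ ξ in N..R, osc x t ξ‖ := by rw [RCLike.norm_conj]; ring
      _ ≤ 2 * (3/(7/ε)) := by linarith
      _ = 6 * ε / 7 := by rw [div_div_eq_mul_div]; ring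
      _ < ε := by linarith
  obtain ⟨L, hL⟩ := cauchySeq_tendsto_of_complete hcauchy
  refine ⟨L, hL, ?_⟩
  have hnorm : Tendsto (fun R => ‖F R‖) atTop (nhds ‖L‖) := hL.norm
  have hev : ∀ᶠ R in atTop, ‖F R‖ ≤ 28 * t ^ (-(1:ℝ)/3) := by
    filter_upwards [eventually_ge_atTop (0:ℝ)] with R hR
    rw [hFI R]
    calc ‖_ + _‖ ≤ ‖I R‖ + ‖(starRingEnd ℂ) (I R)‖ := norm_add_le _ _
      _ = 2 * ‖I R‖ := by rw [RCLike.norm_conj]; ring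
      _ ≤ 2 * (14 * t ^ (-(1:ℝ)/3)) := by
          have := hbound R hR
          linarith
      _ = 28 * t ^ (-(1:ℝ)/3) := by ring
  have := le_of_tendsto hnorm hev
  exact this
end
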